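/- Let G be a finite simple graph with at least one edge, c the maximum size of a core of G, and consider any secret sharing scheme on G with secret ξ (H(ξ)>0) and shares S_v. Then max_v H(S_v)/H(ξ) ≥ 2 − 1/c, assuming the independent sequence bound f(X) ≥ |X|+1 holds for the normalized entropy function f and every core X of G. -/

import Mathlib

open scoped Classical

/-- Shannon entropy of the (discrete, finite-range) random variable `X` on the
finite probability space `(Ω, p)`. -/
noncomputable def entr {Ω S : Type*} [Fintype Ω] [DecidableEq S]
    (p : Ω → ℝ) (X : Ω → S) : ℝ :=
  ∑ s ∈ Finset.univ.image X,
    Real.negMulLog (∑ ω ∈ Finset.univ.filter (fun ω => X ω = s), p ω)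

/-- The joint random variable formed by the shares of the vertices in `A`. -/
def joint {V Ω T : Type*} (S : V → Ω → T) (A : Finset V) (ω : Ω) :
    {x // x ∈ A} → T :=
  fun a => S a.1 ω

/-- A set of vertices is qualified if it contains both endpoints of an edge. -/
def Qualified {V : Type*} (G : SimpleGraph V) (A : Finset V) : Prop :=
  ∃ u ∈ A, ∃ v ∈ A, G.Adj u v

/-- A core of a graph `G`: `X` induces a connected subgraph and for each
`x ∈ X` there is a neighbor `x' ∉ X` whose only neighbor in `X` is `x`, with
the chosen outside neighbors forming an independent set. -/
def IsCore {V : Type*} (G : SimpleGraph V) (X : Finset V) : Prop :=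
  (G.induce (X : Set V)).Connected ∧
    ∃ g : V → V,
      (∀ x ∈ X, g x ∉ X ∧ G.Adj x (g x) ∧ ∀ y ∈ X, G.Adj y (g x) → y = x) ∧
      (∀ x ∈ X, ∀ y ∈ X, ¬ G.Adj (g x) (g y))

namespace LoadAux

variable {Ω : Type*} [Fintype Ω]

noncomputable def pm {S : Type*} [DecidableEq S] (p : Ω → ℝ) (X : Ω → S) (s : S) : ℝ :=
  ∑ ω ∈ Finset.univ.filter (fun ω => X ω = s), p ω

lemma pm_nonneg {S : Type*} [DecidableEq S] {p : Ω → ℝ} (hp : ∀ ω, 0 ≤ p ω)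
    (X : Ω → S) (s : S) : 0 ≤ pm p X s :=
  Finset.sum_nonneg fun ω _ => hp ω

lemma le_pm {S : Type*} [DecidableEq S] {p : Ω → ℝ} (hp : ∀ ω, 0 ≤ p ω)
    (X : Ω → S) (ω : Ω) : p ω ≤ pm p X (X ω) :=
  Finset.single_le_sum (fun ω' _ => hp ω') (by simp)

lemma pm_mono {S S' : Type*} [DecidableEq S] [DecidableEq S'] {p : Ω → ℝ}
    (hp : ∀ ω, 0 ≤ p ω) {X : Ω → S} {Y : Ω → S'} {s : S} {t : S'}
    (h : ∀ ω', X ω' = s → Y ω' = t) : pm p X s ≤ pm p Y t := by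
  apply Finset.sum_le_sum_of_subset_of_nonneg
  · intro ω' hω'
    simp only [Finset.mem_filter, Finset.mem_univ, true_and] at hω' ⊢
    exact h ω' hω'
  · exact fun i _ _ => hp i

lemma sum_pm (p : Ω → ℝ) {S : Type*} [DecidableEq S] (X : Ω → S) :
    ∑ s ∈ Finset.univ.image X, pm p X s = ∑ ω, p ω :=
  Finset.sum_fiberwise_of_maps_to (fun ω _ => Finset.mem_image_of_mem X (Finset.mem_univ ω)) p

lemma entr_eq (p : Ω → ℝ) {S : Type*} [DecidableEq S] (X : Ω → S) :
    entr p X = ∑ ω, p ω * (-Real.log (pm p X (X ω))) := by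
  rw [← Finset.sum_fiberwise_of_maps_to
      (fun ω _ => Finset.mem_image_of_mem X (Finset.mem_univ ω))
      (fun ω => p ω * (-Real.log (pm p X (X ω))))]
  refine Finset.sum_congr rfl fun s _ => ?_
  have h1 : ∀ ω ∈ Finset.univ.filter (fun ω => X ω = s),
      p ω * (-Real.log (pm p X (X ω))) = p ω * (-Real.log (pm p X s)) := by
    intro ω hω
    rw [(Finset.mem_filter.mp hω).2]
  rw [Finset.sum_congr rfl h1, ← Finset.sum_mul]
  show Real.negMulLog (pm p X s) = (pm p X s) * (-Real.log (pm p X s))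
  rw [Real.negMulLog]; ring

lemma entr_comp_le {S S' : Type*} [DecidableEq S] [DecidableEq S'] {p : Ω → ℝ}
    (hp : ∀ ω, 0 ≤ p ω) {X : Ω → S} {Y : Ω → S'} (φ : S → S')
    (h : ∀ ω, Y ω = φ (X ω)) : entr p Y ≤ entr p X := by
  rw [entr_eq, entr_eq]
  refine Finset.sum_le_sum fun ω _ => ?_
  rcases (hp ω).eq_or_lt with h0 | h0
  · rw [← h0]; simp
  · have hx : 0 < pm p X (X ω) := lt_of_lt_of_le h0 (le_pm hp X ω)
    have hxy : pm p X (X ω) ≤ pm p Y (Y ω) :=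
      pm_mono hp (fun ω' hω' => by rw [h ω', hω', h ω])
    have hl := Real.log_le_log hx hxy
    have := neg_le_neg hl
    exact mul_le_mul_of_nonneg_left this (le_of_lt h0)

lemma entr_congr {S S' : Type*} [DecidableEq S] [DecidableEq S'] {p : Ω → ℝ}
    (hp : ∀ ω, 0 ≤ p ω) {X : Ω → S} {Y : Ω → S'} (φ : S → S') (ψ : S' → S)
    (h1 : ∀ ω, Y ω = φ (X ω)) (h2 : ∀ ω, X ω = ψ (Y ω)) : entr p Y = entr p X :=
  le_antisymm (entr_comp_le hp φ h1) (entr_comp_le hp ψ h2)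

lemma entr_const {S : Type*} [DecidableEq S] {p : Ω → ℝ} (hsum : ∑ ω, p ω = 1)
    (s0 : S) : entr p (fun _ => s0) = 0 := by
  rw [entr_eq]
  have h2 : pm p (fun _ : Ω => s0) s0 = 1 := by
    rw [pm]
    simpa using hsum
  simp [h2]

lemma sum_pm_pair_le {S1 S3 : Type*} [DecidableEq S1] [DecidableEq S3] {p : Ω → ℝ}
    (hp : ∀ ω, 0 ≤ p ω) (X : Ω → S1) (Z : Ω → S3) (F : Finset S1) (z : S3) :
    ∑ x ∈ F, pm p (fun ω => (X ω, Z ω)) (x, z) ≤ pm p Z z := by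
  have h1 : ∀ x ∈ F, pm p (fun ω => (X ω, Z ω)) (x, z)
      = ∑ ω ∈ (Finset.univ.filter (fun ω => X ω ∈ F ∧ Z ω = z)).filter
          (fun ω => X ω = x), p ω := by
    intro x hx
    rw [pm]
    congr 1
    ext ω
    simp only [Finset.mem_filter, Finset.mem_univ, true_and, Prod.mk.injEq]
    constructor
    · rintro ⟨hXx, hZz⟩; exact ⟨⟨hXx ▸ hx, hZz⟩, hXx⟩
    · rintro ⟨⟨_, hZz⟩, hXx⟩; exact ⟨hXx, hZz⟩
  rw [Finset.sum_congr rfl h1,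
      Finset.sum_fiberwise_of_maps_to (fun ω hω => ((Finset.mem_filter.mp hω).2).1) p,
      pm]
  apply Finset.sum_le_sum_of_subset_of_nonneg
  · intro ω hω
    simp only [Finset.mem_filter, Finset.mem_univ, true_and] at hω ⊢
    exact hω.2
  · exact fun i _ _ => hp i

lemma entr_submod {S1 S2 S3 : Type*} [DecidableEq S1] [DecidableEq S2] [DecidableEq S3]
    {p : Ω → ℝ} (hp : ∀ ω, 0 ≤ p ω) (hsum : ∑ ω, p ω = 1)
    (X : Ω → S1) (Y : Ω → S2) (Z : Ω → S3) :
    entr p (fun ω => (X ω, Y ω, Z ω)) + entr p Z ≤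
      entr p (fun ω => (X ω, Z ω)) + entr p (fun ω => (Y ω, Z ω)) := by
  set XZ : Ω → S1 × S3 := fun ω => (X ω, Z ω) with hXZ
  set YZ : Ω → S2 × S3 := fun ω => (Y ω, Z ω) with hYZ
  set W : Ω → S1 × S2 × S3 := fun ω => (X ω, Y ω, Z ω) with hW
  set u : Ω → ℝ := fun ω =>
    pm p XZ (XZ ω) * pm p YZ (YZ ω) / (pm p W (W ω) * pm p Z (Z ω)) with hu
  -- the per-point inequality
  have key : ∀ ω ∈ (Finset.univ : Finset Ω), p ω - p ω * u ω ≤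
      (p ω * (-Real.log (pm p XZ (XZ ω))) + p ω * (-Real.log (pm p YZ (YZ ω)))) -
      (p ω * (-Real.log (pm p W (W ω))) + p ω * (-Real.log (pm p Z (Z ω)))) := by
    intro ω _
    rcases (hp ω).eq_or_lt with h0 | h0
    · rw [← h0]; simp
    · have ha : 0 < pm p XZ (XZ ω) := lt_of_lt_of_le h0 (le_pm hp XZ ω)
      have hb : 0 < pm p YZ (YZ ω) := lt_of_lt_of_le h0 (le_pm hp YZ ω)
      have hcc : 0 < pm p W (W ω) := lt_of_lt_of_le h0 (le_pm hp W ω)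
      have hd : 0 < pm p Z (Z ω) := lt_of_lt_of_le h0 (le_pm hp Z ω)
      have hupos : 0 < u ω := by
        rw [hu]
        exact div_pos (mul_pos ha hb) (mul_pos hcc hd)
      have hlog := Real.log_le_sub_one_of_pos hupos
      have hexp : Real.log (u ω) = Real.log (pm p XZ (XZ ω)) + Real.log (pm p YZ (YZ ω))
          - Real.log (pm p W (W ω)) - Real.log (pm p Z (Z ω)) := by
        rw [hu]
        show Real.log (pm p XZ (XZ ω) * pm p YZ (YZ ω) /
          (pm p W (W ω) * pm p Z (Z ω))) = _
        rw [Real.log_div (by positivity) (by positivity), Real.log_mul ha.ne' hb.ne',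
            Real.log_mul hcc.ne' hd.ne']
        ring
      have hmul := mul_le_mul_of_nonneg_left hlog (le_of_lt h0)
      rw [hexp] at hmul
      nlinarith [hmul]
  -- the mass bound
  have hR : ∑ ω, p ω * u ω ≤ 1 := by
    have hgroup : ∑ ω, p ω * u ω
        = ∑ t ∈ Finset.univ.image W, pm p W t *
            (pm p XZ (t.1, t.2.2) * pm p YZ (t.2.1, t.2.2) /
              (pm p W t * pm p Z t.2.2)) := by
      rw [← Finset.sum_fiberwise_of_maps_to
          (fun ω _ => Finset.mem_image_of_mem W (Finset.mem_univ ω))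
          (fun ω => p ω * u ω)]
      refine Finset.sum_congr rfl fun t _ => ?_
      have hcong : ∀ ω ∈ Finset.univ.filter (fun ω => W ω = t),
          p ω * u ω = p ω * (pm p XZ (t.1, t.2.2) * pm p YZ (t.2.1, t.2.2) /
            (pm p W t * pm p Z t.2.2)) := by
        intro ω hω
        have hWω := (Finset.mem_filter.mp hω).2
        rw [hu, ← hWω]
      rw [Finset.sum_congr rfl hcong, ← Finset.sum_mul]
      rfl
    have hstep : ∀ t ∈ Finset.univ.image W,
        pm p W t * (pm p XZ (t.1, t.2.2) * pm p YZ (t.2.1, t.2.2) /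
          (pm p W t * pm p Z t.2.2))
        ≤ pm p XZ (t.1, t.2.2) * pm p YZ (t.2.1, t.2.2) / pm p Z t.2.2 := by
      intro t _
      rcases (pm_nonneg hp W t).eq_or_lt with hC0 | hC0
      · rw [← hC0]
        simp only [zero_mul, mul_zero]
        exact div_nonneg (mul_nonneg (pm_nonneg hp _ _) (pm_nonneg hp _ _))
          (pm_nonneg hp _ _)
      · have hCD : pm p W t ≤ pm p Z t.2.2 :=
          pm_mono hp (fun ω' h => congrArg (fun q : S1 × S2 × S3 => q.2.2) h)
        have hD : 0 < pm p Z t.2.2 := lt_of_lt_of_le hC0 hCD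
        have heq : pm p W t * (pm p XZ (t.1, t.2.2) * pm p YZ (t.2.1, t.2.2) /
            (pm p W t * pm p Z t.2.2))
            = pm p XZ (t.1, t.2.2) * pm p YZ (t.2.1, t.2.2) / pm p Z t.2.2 := by
          field_simp
        rw [heq]
    have hR2 : ∑ t ∈ Finset.univ.image W,
        pm p XZ (t.1, t.2.2) * pm p YZ (t.2.1, t.2.2) / pm p Z t.2.2 ≤ 1 := by
      rw [← Finset.sum_fiberwise_of_maps_to
          (g := fun t : S1 × S2 × S3 => t.2.2)
          (t := (Finset.univ.image W).image (fun t : S1 × S2 × S3 => t.2.2))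
          (fun t ht => Finset.mem_image_of_mem _ ht)
          (fun t => pm p XZ (t.1, t.2.2) * pm p YZ (t.2.1, t.2.2) / pm p Z t.2.2)]
      have hinner : ∀ z ∈ (Finset.univ.image W).image (fun t : S1 × S2 × S3 => t.2.2),
          ∑ t ∈ (Finset.univ.image W).filter (fun t => t.2.2 = z),
            pm p XZ (t.1, t.2.2) * pm p YZ (t.2.1, t.2.2) / pm p Z t.2.2
          ≤ pm p Z z := by
        intro z _
        have hcong2 : ∀ t ∈ (Finset.univ.image W).filter
            (fun t : S1 × S2 × S3 => t.2.2 = z),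
            pm p XZ (t.1, t.2.2) * pm p YZ (t.2.1, t.2.2) / pm p Z t.2.2
            = pm p XZ (t.1, z) * pm p YZ (t.2.1, z) / pm p Z z := by
          intro t ht
          rw [(Finset.mem_filter.mp ht).2]
        rw [Finset.sum_congr rfl hcong2, ← Finset.sum_div]
        have hnum : ∑ t ∈ (Finset.univ.image W).filter
            (fun t : S1 × S2 × S3 => t.2.2 = z),
            pm p XZ (t.1, z) * pm p YZ (t.2.1, z)
            ≤ pm p Z z * pm p Z z := by
          have hinj : ∀ t1 ∈ (Finset.univ.image W).filter
              (fun t : S1 × S2 × S3 => t.2.2 = z), ∀ t2 ∈ (Finset.univ.image W).filter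
              (fun t : S1 × S2 × S3 => t.2.2 = z),
              (fun t : S1 × S2 × S3 => (t.1, t.2.1)) t1
                = (fun t : S1 × S2 × S3 => (t.1, t.2.1)) t2 → t1 = t2 := by
            intro t1 h1 t2 h2 h12
            have e1 : t1.2.2 = z := (Finset.mem_filter.mp h1).2
            have e2 : t2.2.2 = z := (Finset.mem_filter.mp h2).2
            have h12' : (t1.1, t1.2.1) = (t2.1, t2.2.1) := h12
            rw [Prod.mk.injEq] at h12'
            exact Prod.ext h12'.1 (Prod.ext h12'.2 (e1.trans e2.symm))
          set Q := ((Finset.univ.image W).filter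
              (fun t : S1 × S2 × S3 => t.2.2 = z)).image
              (fun t : S1 × S2 × S3 => (t.1, t.2.1)) with hQdef
          have him : ∑ q ∈ Q, pm p XZ (q.1, z) * pm p YZ (q.2, z)
              = ∑ t ∈ (Finset.univ.image W).filter
                  (fun t : S1 × S2 × S3 => t.2.2 = z),
                  pm p XZ (t.1, z) * pm p YZ (t.2.1, z) :=
            Finset.sum_image hinj
          rw [← him]
          calc ∑ q ∈ Q, pm p XZ (q.1, z) * pm p YZ (q.2, z)
              ≤ ∑ q ∈ (Q.image Prod.fst) ×ˢ (Q.image Prod.snd),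
                  pm p XZ (q.1, z) * pm p YZ (q.2, z) :=
                Finset.sum_le_sum_of_subset_of_nonneg Finset.subset_product
                  (fun q _ _ => mul_nonneg (pm_nonneg hp _ _) (pm_nonneg hp _ _))
            _ = (∑ x ∈ Q.image Prod.fst, pm p XZ (x, z)) *
                  (∑ y ∈ Q.image Prod.snd, pm p YZ (y, z)) := by
                rw [Finset.sum_product]
                rw [Finset.sum_mul_sum]
            _ ≤ pm p Z z * pm p Z z := by
                apply mul_le_mul (sum_pm_pair_le hp X Z _ z) (sum_pm_pair_le hp Y Z _ z)
                  (Finset.sum_nonneg fun y _ => pm_nonneg hp _ _) (pm_nonneg hp _ _)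
        rcases (pm_nonneg hp Z z).eq_or_lt with hz0 | hz0
        · have hnum0 : ∑ t ∈ (Finset.univ.image W).filter
              (fun t : S1 × S2 × S3 => t.2.2 = z),
              pm p XZ (t.1, z) * pm p YZ (t.2.1, z) = 0 := by
            apply le_antisymm
            · calc _ ≤ pm p Z z * pm p Z z := hnum
                _ = 0 := by rw [← hz0]; ring
            · exact Finset.sum_nonneg fun t _ =>
                mul_nonneg (pm_nonneg hp _ _) (pm_nonneg hp _ _)
          rw [hnum0, zero_div, ← hz0]
        · rw [div_le_iff₀ hz0]
          exact hnum
      calc ∑ z ∈ (Finset.univ.image W).image (fun t : S1 × S2 × S3 => t.2.2),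
            ∑ t ∈ (Finset.univ.image W).filter (fun t => t.2.2 = z),
              pm p XZ (t.1, t.2.2) * pm p YZ (t.2.1, t.2.2) / pm p Z t.2.2
          ≤ ∑ z ∈ (Finset.univ.image W).image (fun t : S1 × S2 × S3 => t.2.2),
              pm p Z z := Finset.sum_le_sum hinner
        _ ≤ ∑ z ∈ Finset.univ.image Z, pm p Z z := by
            apply Finset.sum_le_sum_of_subset_of_nonneg
            · intro z hz
              obtain ⟨t, ht, rfl⟩ := Finset.mem_image.mp hz
              obtain ⟨ω, _, rfl⟩ := Finset.mem_image.mp ht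
              exact Finset.mem_image_of_mem Z (Finset.mem_univ ω)
            · exact fun z _ _ => pm_nonneg hp Z z
        _ = 1 := by rw [sum_pm p Z, hsum]
    calc ∑ ω, p ω * u ω
        = ∑ t ∈ Finset.univ.image W, pm p W t *
            (pm p XZ (t.1, t.2.2) * pm p YZ (t.2.1, t.2.2) /
              (pm p W t * pm p Z t.2.2)) := hgroup
      _ ≤ ∑ t ∈ Finset.univ.image W,
            pm p XZ (t.1, t.2.2) * pm p YZ (t.2.1, t.2.2) / pm p Z t.2.2 :=
          Finset.sum_le_sum hstep
      _ ≤ 1 := hR2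
  -- put it together
  have eL : entr p W + entr p Z
      = ∑ ω, (p ω * (-Real.log (pm p W (W ω))) + p ω * (-Real.log (pm p Z (Z ω)))) := by
    rw [entr_eq, entr_eq, Finset.sum_add_distrib]
  have eR : entr p XZ + entr p YZ
      = ∑ ω, (p ω * (-Real.log (pm p XZ (XZ ω))) + p ω * (-Real.log (pm p YZ (YZ ω)))) := by
    rw [entr_eq, entr_eq, Finset.sum_add_distrib]
  rw [eL, eR, ← sub_nonneg, ← Finset.sum_sub_distrib]
  have h1 := Finset.sum_le_sum key
  have h2 : ∑ ω, (p ω - p ω * u ω) = 1 - ∑ ω, p ω * u ω := by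
    rw [Finset.sum_sub_distrib, hsum]
  linarith

-- ### wrapper lemmas about joint shares

lemma joint_single {V T : Type*} [DecidableEq T] (p : Ω → ℝ) (hp : ∀ ω, 0 ≤ p ω)
    (S : V → Ω → T) (v : V) :
    entr p (joint S ({v} : Finset V)) = entr p (S v) := by
  refine entr_congr hp (X := S v) (Y := joint S ({v} : Finset V))
    (φ := fun t => fun _ => t)
    (ψ := fun f : {x // x ∈ ({v} : Finset V)} → T => f ⟨v, Finset.mem_singleton_self v⟩)
    ?_ ?_
  · intro ω
    funext a
    have ha : a.1 = v := Finset.mem_singleton.mp a.2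
    show S a.1 ω = S v ω
    rw [ha]
  · intro ω
    rfl

lemma entr_joint_union_le {V T : Type*} [DecidableEq T] (p : Ω → ℝ)
    (hp : ∀ ω, 0 ≤ p ω) (hsum : ∑ ω, p ω = 1) (S : V → Ω → T) (A B : Finset V) :
    entr p (joint S (A ∪ B)) ≤ entr p (joint S A) + entr p (joint S B) := by
  have h3 := entr_submod hp hsum (joint S A) (joint S B) (fun _ : Ω => ())
  have hconst : entr p (fun _ : Ω => ()) = 0 := entr_const hsum ()
  have e1 : entr p (fun ω => (joint S A ω, ())) = entr p (joint S A) :=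
    entr_congr hp (φ := fun u => (u, ())) (ψ := Prod.fst) (fun ω => rfl) (fun ω => rfl)
  have e2 : entr p (fun ω => (joint S B ω, ())) = entr p (joint S B) :=
    entr_congr hp (φ := fun u => (u, ())) (ψ := Prod.fst) (fun ω => rfl) (fun ω => rfl)
  have e3 : entr p (joint S (A ∪ B)) ≤
      entr p (fun ω => (joint S A ω, joint S B ω, ())) := by
    refine entr_comp_le hp
      (φ := fun q : ({x // x ∈ A} → T) × (({x // x ∈ B} → T) × Unit) =>
        fun a : {x // x ∈ A ∪ B} =>
          if h : a.1 ∈ A then q.1 ⟨a.1, h⟩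
          else q.2.1 ⟨a.1, (Finset.mem_union.mp a.2).resolve_left h⟩) ?_
    intro ω
    funext a
    by_cases h : a.1 ∈ A <;> simp [joint, h]
  linarith

lemma entr_joint_strict {V T : Type*} [DecidableEq T] {G : SimpleGraph V}
    (p : Ω → ℝ) (hp : ∀ ω, 0 ≤ p ω) (hsum : ∑ ω, p ω = 1)
    (S : V → Ω → T) (ξ : Ω → T)
    (hdet : ∀ A : Finset V, Qualified G A →
      entr p (fun ω => (joint S A ω, ξ ω)) = entr p (joint S A))
    (hind : ∀ A : Finset V, ¬ Qualified G A →
      entr p (fun ω => (joint S A ω, ξ ω)) = entr p (joint S A) + entr p ξ)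
    (A B : Finset V) (hA : Qualified G A) (hB : Qualified G B)
    (hAB : ¬ Qualified G (A ∩ B)) :
    entr p (joint S (A ∪ B)) + entr p (joint S (A ∩ B)) + entr p ξ
      ≤ entr p (joint S A) + entr p (joint S B) := by
  have h3 := entr_submod hp hsum (joint S A) (joint S B)
    (fun ω => (joint S (A ∩ B) ω, ξ ω))
  have e1 : entr p (fun ω => (joint S A ω, joint S (A ∩ B) ω, ξ ω))
      = entr p (fun ω => (joint S A ω, ξ ω)) :=
    entr_congr hp
      (φ := fun q : ({x // x ∈ A} → T) × T =>
        (q.1, fun a : {x // x ∈ A ∩ B} => q.1 ⟨a.1, (Finset.mem_inter.mp a.2).1⟩, q.2))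
      (ψ := fun q : ({x // x ∈ A} → T) × (({x // x ∈ A ∩ B} → T) × T) => (q.1, q.2.2))
      (fun ω => rfl) (fun ω => rfl)
  have e2 : entr p (fun ω => (joint S B ω, joint S (A ∩ B) ω, ξ ω))
      = entr p (fun ω => (joint S B ω, ξ ω)) :=
    entr_congr hp
      (φ := fun q : ({x // x ∈ B} → T) × T =>
        (q.1, fun a : {x // x ∈ A ∩ B} => q.1 ⟨a.1, (Finset.mem_inter.mp a.2).2⟩, q.2))
      (ψ := fun q : ({x // x ∈ B} → T) × (({x // x ∈ A ∩ B} → T) × T) => (q.1, q.2.2))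
      (fun ω => rfl) (fun ω => rfl)
  have e3 : entr p (joint S (A ∪ B)) ≤
      entr p (fun ω => (joint S A ω, joint S B ω,
        joint S (A ∩ B) ω, ξ ω)) := by
    refine entr_comp_le hp
      (φ := fun q : ({x // x ∈ A} → T) ×
          (({x // x ∈ B} → T) × (({x // x ∈ A ∩ B} → T) × T)) =>
        fun a : {x // x ∈ A ∪ B} =>
          if h : a.1 ∈ A then q.1 ⟨a.1, h⟩
          else q.2.1 ⟨a.1, (Finset.mem_union.mp a.2).resolve_left h⟩) ?_
    intro ω
    funext a
    by_cases h : a.1 ∈ A <;> simp [joint, h]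
  have e4 := hind (A ∩ B) hAB
  have e5 := hdet A hA
  have e6 := hdet B hB
  linarith

-- ### graph / list machinery

lemma walk_cross {W : Type*} {G' : SimpleGraph W} (Sset : Set W) :
    ∀ {a b : W}, G'.Walk a b → a ∈ Sset → b ∉ Sset →
      ∃ u v, u ∈ Sset ∧ v ∉ Sset ∧ G'.Adj u v := by
  intro a b w
  induction w with
  | nil => intro ha hb; exact absurd ha hb
  | @cons x y z h pw ih =>
    intro ha hb
    by_cases hy : y ∈ Sset
    · exact ih hy hb
    · exact ⟨x, y, ha, hy, h⟩

def ChainProp {V : Type*} (G : SimpleGraph V) (l : List V) : Prop :=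
  ∀ k (hk : k < l.length), 0 < k → ∃ j, ∃ hj : j < k,
    G.Adj (l[j]'(hj.trans hk)) (l[k]'hk)

lemma chain_extend {V : Type*} (G : SimpleGraph V) (X : Finset V)
    (hconn : (G.induce (X : Set V)).Connected) :
    ∀ n (l : List V), l ≠ [] → l.Nodup → l.toFinset ⊆ X →
      X.card = l.toFinset.card + n → ChainProp G l →
      ∃ l' : List V, l'.Nodup ∧ l'.toFinset = X ∧ ChainProp G l' := by
  intro n
  induction n with
  | zero =>
    intro l _ hnd hsub hcard hchain
    have : l.toFinset = X := Finset.eq_of_subset_of_card_le hsub (by omega)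
    exact ⟨l, hnd, this, hchain⟩
  | succ n ih =>
    intro l hne hnd hsub hcard hchain
    have hne2 : l.toFinset ≠ X := by
      intro h
      rw [h] at hcard
      omega
    obtain ⟨b, hbX, hbl⟩ := Finset.exists_of_ssubset (hsub.ssubset_of_ne hne2)
    have haX : l.head hne ∈ X := hsub (List.mem_toFinset.mpr (List.head_mem hne))
    obtain ⟨wk⟩ := hconn.preconnected ⟨l.head hne, by exact_mod_cast haX⟩
      ⟨b, by exact_mod_cast hbX⟩
    obtain ⟨u, v, huS, hvS, huv⟩ :=
      walk_cross {w : (X : Set V) | ↑w ∈ l.toFinset} wk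
        (by simp only [Set.mem_setOf_eq]; exact List.mem_toFinset.mpr (List.head_mem hne))
        (by simp only [Set.mem_setOf_eq]; exact hbl)
    have hadj : G.Adj ↑u ↑v := huv
    have hul : (u : V) ∈ l.toFinset := huS
    have hvl : (v : V) ∉ l.toFinset := hvS
    have hvX : (v : V) ∈ X := by exact_mod_cast v.2
    refine ih (l ++ [(v : V)]) (by simp) ?_ ?_ ?_ ?_
    · rw [List.nodup_append]
      refine ⟨hnd, List.nodup_singleton _, ?_⟩
      intro x hx y hy hxy
      rw [List.mem_singleton] at hy
      subst hy hxy
      exact hvl (List.mem_toFinset.mpr hx)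
    · rw [List.toFinset_append, List.toFinset_cons, List.toFinset_nil]
      apply Finset.union_subset hsub
      simpa using hvX
    · have hins : (l ++ [(v : V)]).toFinset = insert (↑v) l.toFinset := by
        rw [List.toFinset_append, List.toFinset_cons, List.toFinset_nil]
        rw [Finset.union_comm]
        rw [Finset.insert_union, Finset.empty_union]
      rw [hins, Finset.card_insert_of_notMem hvl]
      omega
    · intro k hk hk0
      rw [List.length_append, List.length_singleton] at hk
      by_cases hkl : k < l.length
      · obtain ⟨j, hj, hadj'⟩ := hchain k hkl hk0
        refine ⟨j, hj, ?_⟩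
        rw [List.getElem_append_left (hj.trans hkl), List.getElem_append_left hkl]
        exact hadj'
      · have hkeq : k = l.length := by omega
        obtain ⟨j, hjlen, hgetu⟩ := List.mem_iff_getElem.mp
          (List.mem_toFinset.mp hul)
        refine ⟨j, by omega, ?_⟩
        have h1 : (l ++ [(v : V)])[j]'(by simp; omega) = l[j]'hjlen :=
          List.getElem_append_left hjlen
        have h2 : (l ++ [(v : V)])[k]'(by simp; omega) = (v : V) := by
          subst hkeq; simp
        rw [h1, h2, hgetu]
        exact hadj

lemma exists_chain {V : Type*} (G : SimpleGraph V) (X : Finset V)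
    (hconn : (G.induce (X : Set V)).Connected) :
    ∃ l : List V, l.Nodup ∧ l.toFinset = X ∧ ChainProp G l := by
  obtain ⟨⟨x0, hx0⟩⟩ := hconn.nonempty
  have hx0' : x0 ∈ X := by exact_mod_cast hx0
  have hcard : 1 ≤ X.card := Finset.card_pos.mpr ⟨x0, hx0'⟩
  refine chain_extend G X hconn (X.card - 1) [x0] (by simp) (by simp)
    (by simpa using hx0') ?_ ?_
  · simp
    omega
  · intro k hk hk0
    simp at hk
    omega

end LoadAux

/-- any secret sharing scheme on a graph with maximum core size
`c` has some share of normalized entropy at least `2 - 1/c`, assuming the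
independent sequence bound for cores. -/
theorem load_lower_bound {V Ω T : Type*} [Fintype Ω] [DecidableEq T]
    (G : SimpleGraph V) (hedge : ∃ u v, G.Adj u v)
    (c : ℕ) (hc : IsGreatest {n : ℕ | ∃ X : Finset V, IsCore G X ∧ X.card = n} c)
    (p : Ω → ℝ) (hp : ∀ ω, 0 ≤ p ω) (hsum : ∑ ω, p ω = 1)
    (S : V → Ω → T) (ξ : Ω → T)
    (hξ : 0 < entr p ξ)
    (hdet : ∀ A : Finset V, Qualified G A →
      entr p (fun ω => (joint S A ω, ξ ω)) = entr p (joint S A))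
    (hind : ∀ A : Finset V, ¬ Qualified G A →
      entr p (fun ω => (joint S A ω, ξ ω)) = entr p (joint S A) + entr p ξ)
    (hseq : ∀ X : Finset V, IsCore G X →
      (X.card : ℝ) + 1 ≤ entr p (joint S X) / entr p ξ) :
    ∃ v : V, 2 - 1 / (c : ℝ) ≤ entr p (S v) / entr p ξ := by
  classical
  obtain ⟨X, hXcore, hXcard⟩ := hc.1
  obtain ⟨l, hnd, hlX, hchain⟩ := LoadAux.exists_chain G X hXcore.1
  have hXne : X.Nonempty := by
    obtain ⟨⟨x0, hx0⟩⟩ := hXcore.1.nonempty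
    exact ⟨x0, by exact_mod_cast hx0⟩
  have hcpos : 0 < c := by
    rw [← hXcard]
    exact Finset.card_pos.mpr hXne
  have hlen : l.length = c := by
    rw [← hXcard, ← hlX, List.toFinset_card_of_nodup hnd]
  obtain ⟨x0, hx0X⟩ := hXne
  set w : ℕ → V := fun j => l.getD j x0 with hw
  have hwget : ∀ j (hj : j < l.length), w j = l[j]'hj :=
    fun j hj => List.getD_eq_getElem l x0 hj
  have hadj : ∀ k, 0 < k → k < l.length → ∃ j, j < k ∧ G.Adj (w j) (w k) := by
    intro k hk0 hk
    obtain ⟨j, hj, h⟩ := hchain k hk hk0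
    exact ⟨j, hj, by rw [hwget j (hj.trans hk), hwget k hk]; exact h⟩
  set A : ℕ → Finset V := fun i => (Finset.range i).image w with hA
  have hAsucc : ∀ i, A (i + 1) = A i ∪ {w i} := by
    intro i
    simp only [hA]
    ext x
    simp only [Finset.mem_image, Finset.mem_range, Finset.mem_union,
      Finset.mem_singleton, Finset.range_add_one, Finset.mem_insert]
    constructor
    · rintro ⟨j, hj | hj, rfl⟩
      · right; rw [hj]
      · left; exact ⟨j, hj, rfl⟩
    · rintro (⟨j, hj, rfl⟩ | rfl)
      · exact ⟨j, Or.inr hj, rfl⟩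
      · exact ⟨i, Or.inl rfl, rfl⟩
  have hwmem : ∀ j i, j < i → w j ∈ A i := by
    intro j i hj
    exact Finset.mem_image_of_mem w (Finset.mem_range.mpr hj)
  have hfresh : ∀ i, i < l.length → w i ∉ A i := by
    intro i hi hmem
    obtain ⟨j, hj, hwj⟩ := Finset.mem_image.mp hmem
    rw [Finset.mem_range] at hj
    have hji : j < l.length := hj.trans hi
    rw [hwget j hji, hwget i hi] at hwj
    have := (List.Nodup.getElem_inj_iff hnd).mp hwj
    omega
  have hAX : A l.length = X := by
    ext x
    simp only [hA, Finset.mem_image, Finset.mem_range]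
    rw [← hlX, List.mem_toFinset]
    constructor
    · rintro ⟨j, hj, rfl⟩
      rw [hwget j hj]
      exact List.getElem_mem _
    · intro hx
      obtain ⟨j, hj, hjx⟩ := List.mem_iff_getElem.mp hx
      exact ⟨j, hj, by rw [hwget j hj]; exact hjx⟩
  have hq01 : 1 < l.length → G.Adj (w 0) (w 1) := by
    intro h
    obtain ⟨j, hj, hadj'⟩ := hadj 1 one_pos h
    have : j = 0 := by omega
    subst this
    exact hadj'
  have hqA : ∀ i, 2 ≤ i → i ≤ l.length → Qualified G (A i) := by
    intro i h2 hle
    exact ⟨w 0, hwmem 0 i (by omega), w 1, hwmem 1 i (by omega),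
      hq01 (by omega)⟩
  have hsing : ∀ x : V, ¬ Qualified G ({x} : Finset V) := by
    rintro x ⟨u, hu, v, hv, huv⟩
    rw [Finset.mem_singleton] at hu hv
    subst hu; subst hv
    exact G.irrefl huv
  have Hξnn : 0 ≤ entr p ξ := le_of_lt hξ
  have chain : ∀ i, 1 ≤ i → i ≤ l.length →
      entr p (joint S (A i)) ≤ (∑ j ∈ Finset.range i, entr p (S (w j)))
        - ((i : ℝ) - 2) * entr p ξ := by
    intro i h1
    induction i, h1 using Nat.le_induction with
    | base =>
      intro _
      have hA1 : A 1 = {w 0} := by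
        simp only [hA]
        rw [Finset.range_one, Finset.image_singleton]
      rw [hA1, LoadAux.joint_single p hp S (w 0), Finset.sum_range_one]
      push_cast
      linarith
    | succ i h1i ih =>
      intro hle
      have hilen : i < l.length := by omega
      rcases eq_or_lt_of_le h1i with h1eq | h2le
      · -- i = 1
        have hA1 : A 1 = {w 0} := by
          simp only [hA]
          rw [Finset.range_one, Finset.image_singleton]
        have hA2 : A (1 + 1) = ({w 0} : Finset V) ∪ {w 1} := by
          rw [hAsucc 1, hA1]
        rw [← h1eq]
        rw [hA2]
        have hsub2 := LoadAux.entr_joint_union_le p hp hsum S {w 0} {w 1}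
        rw [LoadAux.joint_single p hp S (w 0), LoadAux.joint_single p hp S (w 1)] at hsub2
        rw [Finset.sum_range_succ, Finset.sum_range_one]
        push_cast
        linarith
      · -- 2 ≤ i
        obtain ⟨j, hjlt, hadji⟩ := hadj i (by omega) hilen
        have hwjA : w j ∈ A i := hwmem j i hjlt
        have hwiA : w i ∉ A i := hfresh i hilen
        have hunion : A i ∪ ({w j, w i} : Finset V) = A (i + 1) := by
          rw [hAsucc i]
          ext x
          simp only [Finset.mem_union, Finset.mem_insert, Finset.mem_singleton]
          constructor
          · rintro (h | h | h)
            · exact Or.inl h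
            · exact Or.inl (h ▸ hwjA)
            · exact Or.inr h
          · rintro (h | h)
            · exact Or.inl h
            · exact Or.inr (Or.inr h)
        have hinter : A i ∩ ({w j, w i} : Finset V) = {w j} := by
          ext x
          simp only [Finset.mem_inter, Finset.mem_insert, Finset.mem_singleton]
          constructor
          · rintro ⟨hxA, h | h⟩
            · exact h
            · exact absurd (h ▸ hxA) hwiA
          · intro h
            exact ⟨h ▸ hwjA, Or.inl h⟩
        have hstrict := LoadAux.entr_joint_strict p hp hsum S ξ hdet hind (A i)
          ({w j, w i} : Finset V) (hqA i h2le (by omega))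
          ⟨w j, by simp, w i, by simp, hadji⟩
          (by rw [hinter]; exact hsing (w j))
        rw [hunion, hinter, LoadAux.joint_single p hp S (w j)] at hstrict
        have hpair := LoadAux.entr_joint_union_le p hp hsum S {w j} {w i}
        have hpair' : ({w j} : Finset V) ∪ {w i} = {w j, w i} := by
          rw [Finset.insert_eq]
        rw [hpair', LoadAux.joint_single p hp S (w j),
          LoadAux.joint_single p hp S (w i)] at hpair
        have hih := ih (by omega)
        rw [Finset.sum_range_succ]
        push_cast
        linarith
  have hchainX := chain l.length (by omega) le_rfl
  rw [hAX, hlen] at hchainX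
  have hseqX : ((c : ℝ) + 1) * entr p ξ ≤ entr p (joint S X) := by
    have h := hseq X hXcore
    rw [hXcard] at h
    exact (le_div_iff₀ hξ).mp h
  have hsumlb : (2 * (c : ℝ) - 1) * entr p ξ ≤
      ∑ j ∈ Finset.range c, entr p (S (w j)) := by
    have hc2 : ((c : ℝ) + 1) * entr p ξ ≤
        (∑ j ∈ Finset.range c, entr p (S (w j))) - ((c : ℝ) - 2) * entr p ξ :=
      le_trans hseqX hchainX
    nlinarith [hc2]
  by_contra hno
  push_neg at hno
  have hterm : ∀ j ∈ Finset.range c, entr p (S (w j)) < (2 - 1 / (c : ℝ)) * entr p ξ := by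
    intro j _
    have h := hno (w j)
    rw [div_lt_iff₀ hξ] at h
    exact h
  have hlt := Finset.sum_lt_sum_of_nonempty
    (Finset.nonempty_range_iff.mpr (by omega)) hterm
  rw [Finset.sum_const, Finset.card_range, nsmul_eq_mul] at hlt
  have hcne : (c : ℝ) ≠ 0 := Nat.cast_ne_zero.mpr (by omega)
  have hcalc : (c : ℝ) * ((2 - 1 / (c : ℝ)) * entr p ξ)
      = (2 * (c : ℝ) - 1) * entr p ξ := by
    field_simp
  rw [hcalc] at hlt
  linarith
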